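/- For n ≥ 2, the order b_n of B_n satisfies b_n = 2 b_{n-1} + 1 + sum_{q=0}^{n-3} b_{n-2,q}, where b_{p,q} is the number of elements f of B_n with D(f) ⊆ {n-q,...,n} and R(f) ⊆ {n-p,...,n}. -/

import Mathlib

open Finset

/-- `f : Fin n → Option (Fin n)` represents an injective partial map of `{1,…,n}`
(elements 0-indexed): `f a = some x` means `a ∈ D(f)` with image `x`. Injectivity: -/
def IsPartialInj {n : ℕ} (f : Fin n → Option (Fin n)) : Prop :=
  ∀ a b x, f a = some x → f b = some x → a = b

/-- order preserving: `a < b` in the domain implies `f a < f b`. -/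
def IsOrderPres {n : ℕ} (f : Fin n → Option (Fin n)) : Prop :=
  ∀ a b x y, a < b → f a = some x → f b = some y → x < y

/-- order decreasing: `f a ≤ a` on the domain. -/
def IsOrderDec {n : ℕ} (f : Fin n → Option (Fin n)) : Prop :=
  ∀ a x, f a = some x → x ≤ a

/-- The planar upper triangular rook monoid `B_n`: order-preserving,
order-decreasing injective partial maps of `{1,…,n}`. -/
def Bn (n : ℕ) : Set (Fin n → Option (Fin n)) :=
  {f | IsPartialInj f ∧ IsOrderPres f ∧ IsOrderDec f}

/-- `B_{p,q}`: elements of `B_n` with domain in the last `q+1` elements `{n-q,…,n}`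
and range in the last `p+1` elements `{n-p,…,n}` (1-indexed; `a : Fin n` represents `a+1`). -/
def Bpq (n p q : ℕ) : Set (Fin n → Option (Fin n)) :=
  {f | f ∈ Bn n ∧ ∀ a x, f a = some x → n - q ≤ a.val + 1 ∧ n - p ≤ x.val + 1}

namespace BnRec

variable {n : ℕ}

lemma order_reflect {f : Fin n → Option (Fin n)} (hf : f ∈ Bn n)
    {a b x y : Fin n} (ha : f a = some x) (hb : f b = some y) (hxy : x < y) : a < b := by
  obtain ⟨hinj, hpres, -⟩ := hf
  rcases lt_trichotomy a b with h | h | h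
  · exact h
  · subst h; rw [ha] at hb
    exact absurd (Option.some.inj hb) (ne_of_lt hxy)
  · exact absurd (hpres b a y x h hb ha) (asymm hxy)

noncomputable def dual (f : Fin n → Option (Fin n)) : Fin n → Option (Fin n) :=
  fun a => if h : ∃ u, f u = some a.rev then some (Classical.choose h).rev else none

lemma dual_eq_some {f : Fin n → Option (Fin n)} (hf : IsPartialInj f) {a x : Fin n} :
    dual f a = some x ↔ f x.rev = some a.rev := by
  constructor
  · intro h
    unfold dual at h
    split_ifs at h with hex
    · have hx : (Classical.choose hex).rev = x := Option.some.inj h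
      subst hx
      rw [Fin.rev_rev]
      exact Classical.choose_spec hex
  · intro h
    have hex : ∃ u, f u = some a.rev := ⟨x.rev, h⟩
    unfold dual
    rw [dif_pos hex]
    have h2 : Classical.choose hex = x.rev := hf _ _ _ (Classical.choose_spec hex) h
    simp only [h2, Fin.rev_rev]

lemma dual_mem {f : Fin n → Option (Fin n)} (hf : f ∈ Bn n) : dual f ∈ Bn n := by
  obtain ⟨hinj, hpres, hdec⟩ := hf
  refine ⟨?_, ?_, ?_⟩
  · intro a b x ha hb
    rw [dual_eq_some hinj] at ha hb
    rw [ha] at hb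
    exact Fin.rev_inj.mp (Option.some.inj hb)
  · intro a b x y hab ha hb
    rw [dual_eq_some hinj] at ha hb
    have h1 : y.rev < x.rev :=
      order_reflect ⟨hinj, hpres, hdec⟩ hb ha (Fin.rev_lt_rev.mpr hab)
    exact Fin.rev_lt_rev.mp h1
  · intro a x ha
    rw [dual_eq_some hinj] at ha
    exact Fin.rev_le_rev.mp (hdec _ _ ha)

lemma dual_dual {f : Fin n → Option (Fin n)} (hf : f ∈ Bn n) : dual (dual f) = f := by
  have hinj := hf.1
  have hdinj : IsPartialInj (dual f) := (dual_mem hf).1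
  funext a
  cases hfa : f a with
  | none =>
    cases hda : dual (dual f) a with
    | none => rfl
    | some x =>
      rw [dual_eq_some hdinj, dual_eq_some hinj, Fin.rev_rev, Fin.rev_rev, hfa] at hda
      exact nomatch hda
  | some y =>
    exact (dual_eq_some hdinj).mpr ((dual_eq_some hinj).mpr
      (by rw [Fin.rev_rev, Fin.rev_rev]; exact hfa))

lemma ncard_eq_of_inv {α β : Type*} {s : Set α} {t : Set β} (φ : α → β) (ψ : β → α)
    (h1 : ∀ a ∈ s, φ a ∈ t) (h2 : ∀ b ∈ t, ψ b ∈ s)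
    (h3 : ∀ a ∈ s, ψ (φ a) = a) (h4 : ∀ b ∈ t, φ (ψ b) = b) :
    s.ncard = t.ncard := by
  have hbij : Set.BijOn φ s t :=
    ⟨h1, fun a ha b hb hab => by rw [← h3 a ha, ← h3 b hb, hab],
     fun b hb => ⟨ψ b, h2 b hb, h4 b hb⟩⟩
  rw [← hbij.image_eq, Set.ncard_image_of_injOn hbij.injOn]

def extEnd (v : Option (Fin (n+1))) (g : Fin n → Option (Fin n)) :
    Fin (n+1) → Option (Fin (n+1)) :=
  Fin.lastCases v (fun i => (g i).map Fin.castSucc)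

@[simp] lemma extEnd_last (v : Option (Fin (n+1))) (g : Fin n → Option (Fin n)) :
    extEnd v g (Fin.last n) = v := Fin.lastCases_last

@[simp] lemma extEnd_castSucc (v : Option (Fin (n+1))) (g : Fin n → Option (Fin n)) (i : Fin n) :
    extEnd v g i.castSucc = (g i).map Fin.castSucc := by
  unfold extEnd
  exact Fin.lastCases_castSucc i

def res (f : Fin (n+1) → Option (Fin (n+1))) : Fin n → Option (Fin n) :=
  fun i => (f i.castSucc).bind fun x => if h : x.val < n then some ⟨x.val, h⟩ else none

lemma res_eq_some {f : Fin (n+1) → Option (Fin (n+1))} {i x : Fin n} :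
    res f i = some x ↔ f i.castSucc = some x.castSucc := by
  unfold res
  cases hfi : f i.castSucc with
  | none => simp
  | some y =>
    show ((if h : y.val < n then some (⟨y.val, h⟩ : Fin n) else none) = some x) ↔ _
    constructor
    · intro h
      split_ifs at h with hy
      · have h2 : (⟨y.val, hy⟩ : Fin n) = x := Option.some.inj h
        exact congrArg some (Fin.ext (by rw [← h2]; rfl))
    · intro h
      have hy : y = x.castSucc := Option.some.inj h
      subst hy
      have hx : (x.castSucc : Fin (n+1)).val < n := by simp
      rw [dif_pos hx]
      exact congrArg some (Fin.ext (by simp))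

lemma res_lt {f : Fin (n+1) → Option (Fin (n+1))} (hf : f ∈ Bn (n+1))
    {i : Fin n} {y : Fin (n+1)} (h : f i.castSucc = some y) : y.val < n := by
  have h1 : y ≤ i.castSucc := hf.2.2 _ _ h
  have h2 : y.val ≤ i.val := h1
  exact lt_of_le_of_lt h2 i.isLt

lemma res_mem {f : Fin (n+1) → Option (Fin (n+1))} (hf : f ∈ Bn (n+1)) : res f ∈ Bn n := by
  obtain ⟨hinj, hpres, hdec⟩ := hf
  refine ⟨?_, ?_, ?_⟩
  · intro a b x ha hb
    rw [res_eq_some] at ha hb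
    exact Fin.castSucc_injective n (hinj _ _ _ ha hb)
  · intro a b x y hab ha hb
    rw [res_eq_some] at ha hb
    exact Fin.castSucc_lt_castSucc_iff.mp
      (hpres _ _ _ _ (Fin.castSucc_lt_castSucc_iff.mpr hab) ha hb)
  · intro a x ha
    rw [res_eq_some] at ha
    exact Fin.castSucc_le_castSucc_iff.mp (hdec _ _ ha)

lemma extEnd_mem {g : Fin n → Option (Fin n)} (hg : g ∈ Bn n) {v : Option (Fin (n+1))}
    (hv : ∀ i y w, g i = some y → v = some w → y.val < w.val) :
    extEnd v g ∈ Bn (n+1) := by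
  obtain ⟨hinj, hpres, hdec⟩ := hg
  refine ⟨?_, ?_, ?_⟩
  · intro a b x ha hb
    induction a using Fin.lastCases with
    | last =>
      induction b using Fin.lastCases with
      | last => rfl
      | cast j =>
        rw [extEnd_last] at ha
        rw [extEnd_castSucc] at hb
        obtain ⟨y, hy, rfl⟩ := Option.map_eq_some_iff.mp hb
        exact absurd (hv j y _ hy ha) (by simp)
    | cast i =>
      induction b using Fin.lastCases with
      | last =>
        rw [extEnd_last] at hb
        rw [extEnd_castSucc] at ha
        obtain ⟨y, hy, rfl⟩ := Option.map_eq_some_iff.mp ha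
        exact absurd (hv i y _ hy hb) (by simp)
      | cast j =>
        rw [extEnd_castSucc] at ha hb
        obtain ⟨y, hy, hyx⟩ := Option.map_eq_some_iff.mp ha
        obtain ⟨z, hz, hzx⟩ := Option.map_eq_some_iff.mp hb
        have hyz : y = z := Fin.castSucc_injective n (by rw [hyx, hzx])
        subst hyz
        rw [hinj _ _ _ hy hz]
  · intro a b x y hab ha hb
    induction b using Fin.lastCases with
    | last =>
      rw [extEnd_last] at hb
      induction a using Fin.lastCases with
      | last => exact absurd hab (lt_irrefl _)
      | cast i =>
        rw [extEnd_castSucc] at ha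
        obtain ⟨z, hz, rfl⟩ := Option.map_eq_some_iff.mp ha
        have := hv i z y hz hb
        rw [Fin.lt_def]
        simpa using this
    | cast j =>
      induction a using Fin.lastCases with
      | last => exact absurd hab (not_lt.mpr (Fin.le_last _))
      | cast i =>
        rw [extEnd_castSucc] at ha hb
        obtain ⟨z, hz, rfl⟩ := Option.map_eq_some_iff.mp ha
        obtain ⟨w, hw, rfl⟩ := Option.map_eq_some_iff.mp hb
        exact Fin.castSucc_lt_castSucc_iff.mpr
          (hpres _ _ _ _ (Fin.castSucc_lt_castSucc_iff.mp hab) hz hw)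
  · intro a x ha
    induction a using Fin.lastCases with
    | last => exact Fin.le_last x
    | cast i =>
      rw [extEnd_castSucc] at ha
      obtain ⟨y, hy, rfl⟩ := Option.map_eq_some_iff.mp ha
      exact Fin.castSucc_le_castSucc_iff.mpr (hdec _ _ hy)

lemma extEnd_res {f : Fin (n+1) → Option (Fin (n+1))} (hf : f ∈ Bn (n+1)) :
    extEnd (f (Fin.last n)) (res f) = f := by
  funext a
  induction a using Fin.lastCases with
  | last => rw [extEnd_last]
  | cast i =>
    rw [extEnd_castSucc]
    cases hfi : f i.castSucc with
    | none =>
      have hr : res f i = none := by unfold res; rw [hfi]; rfl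
      rw [hr]; rfl
    | some y =>
      have hy : y.val < n := res_lt hf hfi
      have hr : res f i = some ⟨y.val, hy⟩ :=
        res_eq_some.mpr (by rw [hfi]; exact congrArg some (Fin.ext rfl))
      rw [hr, Option.map_some]
      exact congrArg some (Fin.ext rfl)

lemma res_extEnd (v : Option (Fin (n+1))) (g : Fin n → Option (Fin n)) :
    res (extEnd v g) = g := by
  funext i
  cases hgi : g i with
  | none =>
    unfold res
    rw [extEnd_castSucc, hgi]
    rfl
  | some y => exact res_eq_some.mpr (by rw [extEnd_castSucc, hgi]; rfl)

end BnRec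
namespace BnRec

lemma ncard_fiber_sum {α β : Type*} [Finite α] [Fintype β] [DecidableEq β]
    (s : Set α) (g : α → β) :
    s.ncard = ∑ v : β, {a | a ∈ s ∧ g a = v}.ncard := by
  classical
  have hs : s.Finite := Set.toFinite s
  rw [Set.ncard_eq_toFinset_card _ hs,
    Finset.card_eq_sum_card_fiberwise (f := g) (t := Finset.univ) (fun a _ => Finset.mem_univ _)]
  refine Finset.sum_congr rfl fun v _ => ?_
  have h' : {a | a ∈ s ∧ g a = v}.Finite := Set.toFinite _
  rw [Set.ncard_eq_toFinset_card _ h']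
  congr 1
  ext a
  simp

variable {n : ℕ}

lemma fiber_none_card :
    {f | f ∈ Bn (n+1) ∧ f (Fin.last n) = none}.ncard = (Bn n).ncard := by
  refine ncard_eq_of_inv res (extEnd none) ?_ ?_ ?_ ?_
  · intro f hf; exact res_mem hf.1
  · intro g hg
    exact ⟨extEnd_mem hg (fun i y w _ hw => nomatch hw), extEnd_last _ _⟩
  · intro f hf
    rw [← hf.2]
    exact extEnd_res hf.1
  · intro g hg; exact res_extEnd _ _

lemma fiber_some_card (v : Fin (n+1)) :
    {f | f ∈ Bn (n+1) ∧ f (Fin.last n) = some v}.ncard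
      = {g | g ∈ Bn n ∧ ∀ i y, g i = some y → y.val < v.val}.ncard := by
  refine ncard_eq_of_inv res (extEnd (some v)) ?_ ?_ ?_ ?_
  · intro f hf
    refine ⟨res_mem hf.1, ?_⟩
    intro i y hy
    rw [res_eq_some] at hy
    have hlt : y.castSucc < v := hf.1.2.1 _ _ _ _ (Fin.castSucc_lt_last i) hy hf.2
    simpa [Fin.lt_def] using hlt
  · intro g hg
    refine ⟨extEnd_mem hg.1 ?_, extEnd_last _ _⟩
    intro i y w hy hw
    cases hw
    exact hg.2 i y hy
  · intro f hf
    rw [← hf.2]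
    exact extEnd_res hf.1
  · intro g hg; exact res_extEnd _ _

lemma S_card (q : ℕ) :
    {f | f ∈ Bn (n+1) ∧ f (Fin.last n) = none ∧ ∀ a x, f a = some x → x.val ≤ q}.ncard
      = {g | g ∈ Bn n ∧ ∀ i y, g i = some y → y.val ≤ q}.ncard := by
  refine ncard_eq_of_inv res (extEnd none) ?_ ?_ ?_ ?_
  · intro f hf
    refine ⟨res_mem hf.1, fun i y hy => ?_⟩
    rw [res_eq_some] at hy
    have := hf.2.2 _ _ hy
    simpa using this
  · intro g hg
    refine ⟨extEnd_mem hg.1 (fun i y w _ hw => nomatch hw), extEnd_last _ _, ?_⟩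
    intro a x ha
    induction a using Fin.lastCases with
    | last => rw [extEnd_last] at ha; exact nomatch ha
    | cast i =>
      rw [extEnd_castSucc] at ha
      obtain ⟨y, hy, rfl⟩ := Option.map_eq_some_iff.mp ha
      simpa using hg.2 i y hy
  · intro f hf
    rw [← hf.2.1]
    exact extEnd_res hf.1
  · intro g hg; exact res_extEnd _ _

lemma bpq_card (m q : ℕ) (hq : q < m) :
    (Bpq (m+2) m q).ncard
      = {f | f ∈ Bn (m+2) ∧ f (Fin.last (m+1)) = none ∧
          ∀ a x, f a = some x → x.val ≤ q}.ncard := by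
  refine ncard_eq_of_inv dual dual ?_ ?_ ?_ ?_
  · intro f hf
    obtain ⟨hB, hcond⟩ := hf
    refine ⟨dual_mem hB, ?_, ?_⟩
    · cases hd : dual f (Fin.last (m+1)) with
      | none => rfl
      | some x =>
        rw [dual_eq_some hB.1] at hd
        have h2 := (hcond _ _ hd).2
        have h3 : ((Fin.last (m+1)).rev : Fin (m+2)).val = 0 := by
          rw [Fin.val_rev, Fin.val_last]; omega
        exfalso; omega
    · intro a x ha
      rw [dual_eq_some hB.1] at ha
      have h1 := (hcond _ _ ha).1
      have hxv : (x.rev).val = m + 2 - (x.val + 1) := Fin.val_rev x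
      have hx : x.val < m + 2 := x.isLt
      omega
  · intro f hf
    obtain ⟨hB, hnone, hrange⟩ := hf
    refine ⟨dual_mem hB, ?_⟩
    intro a x ha
    rw [dual_eq_some hB.1] at ha
    have h1 := hrange _ _ ha
    have hlast : x.rev ≠ Fin.last (m+1) := by
      intro h
      rw [h, hnone] at ha
      exact nomatch ha
    have hxv : (x.rev).val = m + 2 - (x.val + 1) := Fin.val_rev x
    have hav : (a.rev).val = m + 2 - (a.val + 1) := Fin.val_rev a
    have hxne : (x.rev).val ≠ m + 1 := fun h => hlast (Fin.ext (by rw [h, Fin.val_last]))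
    have hx : x.val < m + 2 := x.isLt
    have ha2 : a.val < m + 2 := a.isLt
    constructor <;> omega
  · intro f hf; exact dual_dual hf.1
  · intro f hf; exact dual_dual hf.1

lemma range_lt_zero_card :
    {g | g ∈ Bn n ∧ ∀ i y, g i = some y → y.val < 0}.ncard = 1 := by
  have hset : {g | g ∈ Bn n ∧ ∀ i y, g i = some y → y.val < 0}
      = {fun _ => (none : Option (Fin n))} := by
    ext g
    simp only [Set.mem_setOf_eq, Set.mem_singleton_iff]
    constructor
    · rintro ⟨-, h⟩
      funext i
      cases hgi : g i with
      | none => rfl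
      | some y => exact absurd (h i y hgi) (Nat.not_lt_zero _)
    · rintro rfl
      exact ⟨⟨fun a b x h => by simp at h,
        fun a b x y _ h => by simp at h,
        fun a x h => by simp at h⟩,
        fun i y h => by simp at h⟩
  rw [hset, Set.ncard_singleton]

end BnRec

open BnRec
open Fin.NatCast

/-- The recursion `b_n = 2 b_{n-1} + 1 + ∑_{q=0}^{n-3} b_{n-2,q}` for `n ≥ 2`. -/
theorem bn_recursion (n : ℕ) (hn : 2 ≤ n) :
    Nat.card (Bn n) =
      2 * Nat.card (Bn (n - 1)) + 1 + ∑ q ∈ Finset.range (n - 2), Nat.card (Bpq n (n - 2) q) := by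
  obtain ⟨m, rfl⟩ : ∃ m, n = m + 2 := ⟨n - 2, by omega⟩
  clear hn
  have hmid : ∀ q ∈ Finset.range m,
      {f | f ∈ Bn (m+2) ∧ f (Fin.last (m+1)) = some (((q+1 : ℕ)) : Fin (m+2))}.ncard
      = (Bpq (m+2) m q).ncard := by
    intro q hq
    have hq' : q < m := Finset.mem_range.mp hq
    rw [fiber_some_card, bpq_card m q hq', S_card q]
    congr 1
    ext g
    have hv : ((((q+1:ℕ)) : Fin (m+2))).val = q+1 := by
      apply Fin.val_cast_of_lt
      omega
    simp only [Set.mem_setOf_eq, hv]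
    constructor
    · rintro ⟨h1, h2⟩
      refine ⟨h1, fun i y hy => ?_⟩
      have := h2 i y hy
      omega
    · rintro ⟨h1, h2⟩
      refine ⟨h1, fun i y hy => ?_⟩
      have := h2 i y hy
      omega
  have hlast : {f | f ∈ Bn (m+2) ∧ f (Fin.last (m+1)) = some (Fin.last (m+1))}.ncard
      = (Bn (m+1)).ncard := by
    rw [fiber_some_card]
    congr 1
    ext g
    simp only [Set.mem_setOf_eq, Fin.val_last]
    exact ⟨fun h => h.1, fun h => ⟨h, fun i y _ => y.isLt⟩⟩
  have hzero : {f | f ∈ Bn (m+2) ∧ f (Fin.last (m+1)) = some (((0:ℕ)) : Fin (m+2))}.ncard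
      = 1 := by
    rw [fiber_some_card]
    have h0 : ((((0:ℕ)) : Fin (m+2))).val = 0 := by simp
    simp only [h0]
    exact range_lt_zero_card
  have e1 : m + 2 - 1 = m + 1 := Nat.succ_sub_one (m+1)
  have e2 : m + 2 - 2 = m := Nat.add_sub_cancel m 2
  rw [e1, e2]
  simp only [Nat.card_coe_set_eq]
  rw [ncard_fiber_sum (Bn (m+2)) (fun f => f (Fin.last (m+1))), Fintype.sum_option]
  have hsum : (∑ v : Fin (m+2), {f | f ∈ Bn (m+2) ∧ f (Fin.last (m+1)) = some v}.ncard)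
      = ∑ k ∈ Finset.range (m+2),
          {f | f ∈ Bn (m+2) ∧ f (Fin.last (m+1)) = some ((k : ℕ) : Fin (m+2))}.ncard := by
    rw [← Fin.sum_univ_eq_sum_range
      (fun k => {f | f ∈ Bn (m+2) ∧ f (Fin.last (m+1)) = some ((k : ℕ) : Fin (m+2))}.ncard) (m+2)]
    exact Finset.sum_congr rfl fun i _ => by rw [Fin.cast_val_eq_self]
  have hlastv : (((m+1 : ℕ)) : Fin (m+2)) = Fin.last (m+1) := by
    apply Fin.ext
    rw [Fin.val_last, Fin.val_cast_of_lt (Nat.lt_succ_self _)]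
  rw [hsum, Finset.sum_range_succ, Finset.sum_range_succ']
  rw [Finset.sum_congr rfl hmid, fiber_none_card, hlastv, hlast, hzero]
  ring
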